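/- Let $G$ be a countable group acting on a countable set $X$ such that for every finite subset $F \subseteq G$ not containing the identity, there exists $x \in X$ with $f \cdot x \neq x$ for all $f \in F$. Then the left regular representation of $G$ is weakly contained in the permutation representation of $G$ on $\ell^2(X)$. -/

import Mathlib

open scoped BigOperators Pointwise

/-- The `ℓ²` norm of a finitely supported function. -/
noncomputable def l2Norm {Y : Type*} (f : Y →₀ ℂ) : ℝ :=
  Real.sqrt (∑ y ∈ f.support, ‖f y‖ ^ 2)

/-- The action of a group algebra element `a ∈ ℂG` on a finitely supported function on a `G`-set
`X` (the permutation representation `ρ` extended to `ℂG`). -/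
noncomputable def permAction {G : Type*} [Group G] {X : Type*} [MulAction G X]
    (a : MonoidAlgebra ℂ G) (η : X →₀ ℂ) : X →₀ ℂ :=
  a.coeff.sum fun g c => c • Finsupp.mapDomain (fun x => g • x) η

lemma l2Norm_mapDomain {Y Z : Type*} (φ : Y → Z) (f : Y →₀ ℂ)
    (h : Set.InjOn φ f.support) :
    l2Norm (Finsupp.mapDomain φ f) = l2Norm f := by
  classical
  unfold l2Norm
  rw [Finsupp.mapDomain_support_of_injOn f h,
    Finset.sum_image (fun y hy z hz hyz => h hy hz hyz)]
  congr 1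
  refine Finset.sum_congr rfl fun y hy => ?_
  rw [Finsupp.mapDomain_apply' (↑f.support) f subset_rfl h hy]

lemma permAction_mapDomain {G X : Type*} [Group G] [MulAction G X]
    (a ξ : MonoidAlgebra ℂ G) (x : X) :
    permAction a (Finsupp.mapDomain (fun g : G => g • x) ξ.coeff)
      = Finsupp.mapDomain (fun g : G => g • x) (a * ξ).coeff := by
  rw [MonoidAlgebra.mul_def, MonoidAlgebra.coeff_finsuppSum, Finsupp.mapDomain_sum]
  unfold permAction
  refine Finsupp.sum_congr fun g _ => ?_
  rw [MonoidAlgebra.coeff_finsuppSum, Finsupp.mapDomain_sum, ← Finsupp.mapDomain_comp, Finsupp.mapDomain, Finsupp.smul_sum]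
  refine Finsupp.sum_congr fun h _ => ?_
  rw [MonoidAlgebra.coeff_single, Finsupp.mapDomain_single]
  simp [Function.comp, mul_smul, Finsupp.smul_single, smul_eq_mul]

/-- If a countable group `G` acts on a countable set `X` so that every finite subset `F ⊆ G` with
`1 ∉ F` is moved off some point of `X`, then the regular representation `λ` is weakly contained in
the permutation representation `ρ` on `ℓ²(X)`: every bound `‖ρ(a)η‖ ≤ C‖η‖` on finitely supported
vectors yields the corresponding bound `‖λ(a)ξ‖ ≤ C‖ξ‖` (note `λ(a)ξ = a * ξ` is convolution). -/
theorem regular_weakly_contained_in_permutation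
    {G : Type*} [Group G] [Countable G] {X : Type*} [Countable X] [MulAction G X]
    (hfree : ∀ F : Finset G, (1 : G) ∉ F → ∃ x : X, ∀ f ∈ F, f • x ≠ x) :
    ∀ a : MonoidAlgebra ℂ G, ∀ C : ℝ, 0 ≤ C →
      (∀ η : X →₀ ℂ, l2Norm (permAction a η) ≤ C * l2Norm η) →
      ∀ ξ : MonoidAlgebra ℂ G, l2Norm (a * ξ : MonoidAlgebra ℂ G).coeff ≤ C * l2Norm ξ.coeff := by
  intro a C hC hbound ξ
  classical
  set S : Finset G := a.coeff.support * ξ.coeff.support ∪ ξ.coeff.support with hS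
  set F : Finset G :=
    ((S ×ˢ S).filter (fun p => p.1 ≠ p.2)).image (fun p => p.1⁻¹ * p.2) with hF
  have h1 : (1 : G) ∉ F := by
    simp only [hF, Finset.mem_image, Finset.mem_filter, Finset.mem_product]
    rintro ⟨⟨g, h⟩, ⟨⟨-, -⟩, hne⟩, heq⟩
    exact hne (by rwa [inv_mul_eq_one] at heq)
  obtain ⟨x, hx⟩ := hfree F h1
  have hinj : Set.InjOn (fun g : G => g • x) S := by
    intro g hg h hh heq
    by_contra hne
    refine hx (g⁻¹ * h) ?_ ?_
    · exact Finset.mem_image.2 ⟨(g, h), Finset.mem_filter.2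
        ⟨Finset.mem_product.2 ⟨hg, hh⟩, hne⟩, rfl⟩
    · simp only at heq
      rw [mul_smul, ← heq, inv_smul_smul]
  have hsupξ : (ξ.coeff.support : Set G) ⊆ (S : Set G) := by
    intro g hg; simp only [hS, Finset.coe_union]; exact Or.inr hg
  have hsupm : ((a * ξ).coeff.support : Set G) ⊆ (S : Set G) := by
    intro g hg
    simp only [hS, Finset.coe_union]
    exact Or.inl (MonoidAlgebra.support_coeff_mul_subset a ξ hg)
  have key := hbound (Finsupp.mapDomain (fun g : G => g • x) ξ.coeff)
  rw [permAction_mapDomain,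
    l2Norm_mapDomain _ _ (hinj.mono hsupm),
    l2Norm_mapDomain _ _ (hinj.mono hsupξ)] at key
  exact key
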